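/- Let D > 0, n ≥ 1, z_1 ≥ ... ≥ z_n ≥ 0 with z_1 > 0, and let n* be the threshold index, i.e., z_i > S/(n*+D) for i ≤ n* and z_i ≤ S/(n*+D) for i > n*, where S = Σ_{j=1}^{n*} z_j. Define f_i(z) = (1/n)·((n+D)/(n*+D))·(z_i(n*+D) − S)/(z_i·D) for i ≤ n* and f_i(z) = 0 for i > n*. Then f_i(z) ≥ 0 for all i and Σ_{i=1}^n f_i(z) ≤ 1. -/

import Mathlib

theorem stmt6 (D : ℝ) (hD : 0 < D) (n : ℕ) (hn : 1 ≤ n)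
    (z : ℕ → ℝ)
    (hsort : ∀ i j, 1 ≤ i → i ≤ j → j ≤ n → z j ≤ z i)
    (hnn : ∀ i, 1 ≤ i → i ≤ n → 0 ≤ z i)
    (hpos : 0 < z 1)
    (m : ℕ) (hm1 : 1 ≤ m) (hmn : m ≤ n)
    (hwin : ∀ i, 1 ≤ i → i ≤ m → z i > (∑ j ∈ Finset.Icc 1 m, z j) / ((m : ℝ) + D))
    (hlose : ∀ i, m < i → i ≤ n → z i ≤ (∑ j ∈ Finset.Icc 1 m, z j) / ((m : ℝ) + D)) :
    (∀ i, 1 ≤ i → i ≤ n →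
      0 ≤ (if i ≤ m then
        (1 / (n : ℝ)) * (((n : ℝ) + D) / ((m : ℝ) + D)) *
          ((z i * ((m : ℝ) + D) - ∑ j ∈ Finset.Icc 1 m, z j) / (z i * D))
      else 0)) ∧
    (∑ i ∈ Finset.Icc 1 n,
      (if i ≤ m then
        (1 / (n : ℝ)) * (((n : ℝ) + D) / ((m : ℝ) + D)) *
          ((z i * ((m : ℝ) + D) - ∑ j ∈ Finset.Icc 1 m, z j) / (z i * D))
      else 0)) ≤ 1 := by
  set S := ∑ j ∈ Finset.Icc 1 m, z j with hS
  have hmD : (0:ℝ) < (m : ℝ) + D := by positivity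
  have hSnn : 0 ≤ S := Finset.sum_nonneg fun j hj => by
    obtain ⟨h1, h2⟩ := Finset.mem_Icc.mp hj
    exact hnn j h1 (h2.trans hmn)
  have hzpos : ∀ i, 1 ≤ i → i ≤ m → 0 < z i := fun i h1 h2 =>
    lt_of_le_of_lt (div_nonneg hSnn hmD.le) (hwin i h1 h2)
  have hnum : ∀ i, 1 ≤ i → i ≤ m → 0 ≤ z i * ((m : ℝ) + D) - S := fun i h1 h2 => by
    have := (div_lt_iff₀ hmD).mp (hwin i h1 h2)
    linarith
  have hnpos : (0:ℝ) < (n : ℝ) := by exact_mod_cast Nat.lt_of_lt_of_le Nat.zero_lt_one hn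
  constructor
  · intro i h1 h2
    by_cases h : i ≤ m
    · rw [if_pos h]
      have hz := hzpos i h1 h
      have hnm := hnum i h1 h
      apply mul_nonneg (mul_nonneg (by positivity) (by positivity))
      exact div_nonneg hnm (by positivity)
    · rw [if_neg h]
  · have hsub : Finset.Icc 1 m ⊆ Finset.Icc 1 n := Finset.Icc_subset_Icc le_rfl hmn
    rw [← Finset.sum_subset hsub (by
      intro x hx hx'
      rw [if_neg]
      intro h
      exact hx' (Finset.mem_Icc.mpr ⟨(Finset.mem_Icc.mp hx).1, h⟩))]
    -- Cauchy-Schwarz: m^2 ≤ S * T where T = ∑ 1/z i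
    set T := ∑ i ∈ Finset.Icc 1 m, 1 / z i with hT
    have hTnn : 0 ≤ T := Finset.sum_nonneg fun i hi => by
      obtain ⟨h1, h2⟩ := Finset.mem_Icc.mp hi
      exact le_of_lt (by have := hzpos i h1 h2; positivity)
    have key : (m : ℝ) * m ≤ S * T := by
      have cs := Finset.sum_mul_sq_le_sq_mul_sq (Finset.Icc 1 m)
        (fun i => Real.sqrt (z i)) (fun i => 1 / Real.sqrt (z i))
      have e1 : ∑ i ∈ Finset.Icc 1 m, Real.sqrt (z i) * (1 / Real.sqrt (z i)) = (m : ℝ) := by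
        have h1' : ∀ i ∈ Finset.Icc 1 m, Real.sqrt (z i) * (1 / Real.sqrt (z i)) = 1 := by
          intro i hi
          obtain ⟨h1, h2⟩ := Finset.mem_Icc.mp hi
          have hz := hzpos i h1 h2
          have : Real.sqrt (z i) ≠ 0 := ne_of_gt (Real.sqrt_pos.mpr hz)
          field_simp
        rw [Finset.sum_congr rfl h1', Finset.sum_const, Nat.card_Icc]
        simp
      have e2 : ∑ i ∈ Finset.Icc 1 m, Real.sqrt (z i) ^ 2 = S := by
        apply Finset.sum_congr rfl
        intro i hi
        obtain ⟨h1, h2⟩ := Finset.mem_Icc.mp hi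
        exact Real.sq_sqrt (hzpos i h1 h2).le
      have e3 : ∑ i ∈ Finset.Icc 1 m, (1 / Real.sqrt (z i)) ^ 2 = T := by
        apply Finset.sum_congr rfl
        intro i hi
        obtain ⟨h1, h2⟩ := Finset.mem_Icc.mp hi
        rw [div_pow, one_pow, Real.sq_sqrt (hzpos i h1 h2).le]
      rw [e1, e2, e3] at cs
      calc (m:ℝ) * m = (m:ℝ)^2 := by ring
        _ ≤ S * T := cs
    have hrw : ∀ i ∈ Finset.Icc 1 m,
        (if i ≤ m then (1 / (n : ℝ)) * (((n : ℝ) + D) / ((m : ℝ) + D)) *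
          ((z i * ((m : ℝ) + D) - S) / (z i * D)) else 0)
        = (1 / (n : ℝ)) * (((n : ℝ) + D) / ((m : ℝ) + D)) *
            (((m : ℝ) + D) / D - (S / D) * (1 / z i)) := by
      intro i hi
      obtain ⟨h1, h2⟩ := Finset.mem_Icc.mp hi
      rw [if_pos h2]
      have hz := hzpos i h1 h2
      congr 1
      field_simp
    rw [Finset.sum_congr rfl hrw, ← Finset.mul_sum, Finset.sum_sub_distrib,
      Finset.sum_const, ← Finset.mul_sum, Nat.card_Icc]
    simp only [Nat.add_sub_cancel, nsmul_eq_mul]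
    rw [← hT]
    have hmn' : (m:ℝ) ≤ (n:ℝ) := by exact_mod_cast hmn
    have h1 : (S / D) * T ≥ (m:ℝ) * m / D := by
      rw [div_mul_eq_mul_div, ge_iff_le, div_le_div_iff₀ hD hD]
      nlinarith
    have h2 : (m:ℝ) * (((m:ℝ) + D) / D) - S / D * T ≤ (m:ℝ) := by
      have : (m:ℝ) * (((m:ℝ)+D)/D) - (m:ℝ)*m/D = (m:ℝ) := by field_simp; ring
      linarith
    have hC : (0:ℝ) ≤ 1 / (n:ℝ) * (((n:ℝ) + D) / ((m:ℝ) + D)) := by positivity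
    calc 1 / (n:ℝ) * (((n:ℝ) + D) / ((m:ℝ) + D)) * ((m:ℝ) * (((m:ℝ) + D) / D) - S / D * T)
        ≤ 1 / (n:ℝ) * (((n:ℝ) + D) / ((m:ℝ) + D)) * (m:ℝ) :=
          mul_le_mul_of_nonneg_left h2 hC
      _ ≤ 1 := by
          have h3 : 1 / (n:ℝ) * (((n:ℝ) + D) / ((m:ℝ) + D)) * (m:ℝ)
              = ((m:ℝ) * ((n:ℝ) + D)) / (((m:ℝ) + D) * (n:ℝ)) := by
            field_simp
          rw [h3, div_le_one (by positivity)]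
          nlinarith
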